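/- Let 𝔅 be a unital algebra and 𝔄 an algebra containing 𝔅 as a subalgebra. Let 𝔄₂ ⊆ 𝔄 be a subalgebra containing 𝔅, and 𝔄₁ = 𝔅 ⊕ 𝔄₁⁰ a subalgebra of 𝔄, where 𝔄₁⁰ is a subalgebra with 𝔅·𝔄₁⁰ ⊆ 𝔄₁⁰ and 𝔄₁⁰·𝔅 ⊆ 𝔄₁⁰. Let Φ : 𝔄 → 𝔅 be a conditional expectation satisfying the monotonic product relations: for all a, a' ∈ 𝔄₁⁰, b ∈ 𝔄₂ and α, β ∈ 𝔄: Φ(α a b a' β) = Φ(α a Φ₂(b) a' β), Φ(b a β) = Φ₂(b) Φ(a β), Φ(α a b) = Φ(α a) Φ₂(b), where Φ₂ = Φ|_{𝔄₂} (and the corresponding relations with α and/or β omitted). Then for every n ≥ 1, every alternating choice ε(1) ≠ ε(2) ≠ ⋯ ≠ ε(n), ε(j) ∈ {1,2}, and all a_j with a_j ∈ 𝔄₁⁰ when ε(j) = 1 and a_j ∈ 𝔄₂ with Φ(a_j) = 0 when ε(j) = 2, such that at least one ε(j) = 2, one has Φ(a₁a₂⋯aₙ) = 0; consequently Φ(a₁a₂⋯aₙ)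 = Φ(a₁)Φ(a₂)⋯Φ(aₙ) for all such alternating tuples. -/
import Mathlib



/-- Theorem 6.7: a conditional expectation `Φ` satisfying the defining
relations of the monotonic product `Φ₁ ▷ Φ₂` (with `𝔄₁ = 𝔅 ⊕ 𝔄₁⁰`) vanishes on every
alternating product of `δ`-centered elements of `𝔄₁` (i.e. elements of `𝔄₁⁰`) and
`Φ₂`-centered elements of `𝔄₂` containing at least one factor from `𝔄₂`; consequently
`Φ(a₁ ⋯ aₙ) = Φ(a₁) ⋯ Φ(aₙ)` on all such alternating tuples, so `Φ₁ ▷ Φ₂` coincides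
with the conditionally free product `Φ₁ ∗_{(δ, Φ₂)} Φ₂`. -/
theorem monotonicProduct_eq_condFreeProduct {B A : Type*}
    [Ring B] [Algebra ℂ B] [Ring A] [Algebra ℂ A]
    (ι : B →ₐ[ℂ] A) (hι : Function.Injective ι)
    (A₂ : Subalgebra ℂ A) (hA₂B : ∀ c : B, ι c ∈ A₂)
    (A₁₀ : NonUnitalSubalgebra ℂ A)
    (hBA₁₀ : ∀ (c : B), ∀ a ∈ A₁₀, ι c * a ∈ A₁₀)
    (hA₁₀B : ∀ (c : B), ∀ a ∈ A₁₀, a * ι c ∈ A₁₀)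
    (hdirect : ∀ (c : B), ∀ a ∈ A₁₀, ι c + a = 0 → c = 0 ∧ a = 0)
    (Φ : A →ₗ[ℂ] B)
    (hfix : ∀ c : B, Φ (ι c) = c)
    (hbimod : ∀ (c₁ c₂ : B) (x : A), Φ (ι c₁ * x * ι c₂) = c₁ * Φ x * c₂)
    -- the defining relations of the monotonic product `Φ₁ ▷ Φ₂`
    (hrel₁ : ∀ a ∈ A₁₀, ∀ a' ∈ A₁₀, ∀ w ∈ A₂, ∀ α β : A,
      Φ (α * a * w * a' * β) = Φ (α * a * ι (Φ w) * a' * β))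
    (hrel₂ : ∀ a ∈ A₁₀, ∀ a' ∈ A₁₀, ∀ w ∈ A₂, ∀ β : A,
      Φ (a * w * a' * β) = Φ (a * ι (Φ w) * a' * β))
    (hrel₃ : ∀ a ∈ A₁₀, ∀ a' ∈ A₁₀, ∀ w ∈ A₂, ∀ α : A,
      Φ (α * a * w * a') = Φ (α * a * ι (Φ w) * a'))
    (hrel₄ : ∀ a ∈ A₁₀, ∀ a' ∈ A₁₀, ∀ w ∈ A₂,
      Φ (a * w * a') = Φ (a * ι (Φ w) * a'))
    (hrel₅ : ∀ w ∈ A₂, ∀ a ∈ A₁₀, ∀ β : A, Φ (w * a * β) = Φ w * Φ (a * β))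
    (hrel₆ : ∀ w ∈ A₂, ∀ a ∈ A₁₀, Φ (w * a) = Φ w * Φ a)
    (hrel₇ : ∀ a ∈ A₁₀, ∀ w ∈ A₂, ∀ α : A, Φ (α * a * w) = Φ (α * a) * Φ w)
    (hrel₈ : ∀ a ∈ A₁₀, ∀ w ∈ A₂, Φ (a * w) = Φ a * Φ w) :
    ∀ (n : ℕ) (ε : Fin (n + 1) → Bool) (a : Fin (n + 1) → A),
      (∀ j : Fin n, ε j.castSucc ≠ ε j.succ) →
      (∀ j, (ε j = true → a j ∈ A₁₀) ∧ (ε j = false → a j ∈ A₂ ∧ Φ (a j) = 0)) →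
      ((∃ j, ε j = false) → Φ (List.ofFn a).prod = 0) ∧
        Φ (List.ofFn a).prod = (List.ofFn fun j => Φ (a j)).prod := by
  intro n ε a halt hmem
  have key : (∃ j, ε j = false) → Φ (List.ofFn a).prod = 0 := by
    rintro ⟨j, hj⟩
    match n, ε, a, halt, hmem, j, hj with
    | 0, ε, a, halt, hmem, j, hj =>
      have hj0 : ε 0 = false := by
        have hj' : j = 0 := Fin.ext (by omega)
        rwa [hj'] at hj
      simpa using ((hmem 0).2 hj0).2
    | 1, ε, a, halt, hmem, j, hj =>
      have h01 : ε 0 ≠ ε 1 := by simpa using halt 0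
      simp only [List.ofFn_succ, List.ofFn_zero, List.prod_cons, List.prod_nil,
        mul_one, Fin.succ_zero_eq_one]
      cases h0 : ε 0 with
      | false =>
        have h1 : ε 1 = true := by
          cases h1 : ε 1
          · exact absurd (h0.trans h1.symm) h01
          · rfl
        have hw := (hmem 0).2 h0
        have ha := (hmem 1).1 h1
        rw [hrel₆ _ hw.1 _ ha, hw.2, zero_mul]
      | true =>
        have h1 : ε 1 = false := by
          cases h1 : ε 1
          · rfl
          · exact absurd (h0.trans h1.symm) h01
        have ha := (hmem 0).1 h0
        have hw := (hmem 1).2 h1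
        rw [hrel₈ _ ha _ hw.1, hw.2, mul_zero]
    | (m+2), ε, a, halt, hmem, j, hj =>
      have h01 : ε 0 ≠ ε 1 := by simpa using halt 0
      have h12 : ε 1 ≠ ε 2 := by simpa using halt 1
      rw [List.ofFn_succ, List.ofFn_succ, List.ofFn_succ, List.prod_cons,
        List.prod_cons, List.prod_cons]
      simp only [Fin.succ_zero_eq_one, Fin.succ_one_eq_two]
      cases h0 : ε 0 with
      | false =>
        have h1 : ε 1 = true := by
          cases h1 : ε 1
          · exact absurd (h0.trans h1.symm) h01
          · rfl
        have hw := (hmem 0).2 h0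
        have ha := (hmem 1).1 h1
        rw [show a 0 * (a 1 * (a 2 * (List.ofFn fun i : Fin m => a i.succ.succ.succ).prod))
            = a 0 * a 1 * (a 2 * (List.ofFn fun i : Fin m => a i.succ.succ.succ).prod) by
          simp only [mul_assoc]]
        rw [hrel₅ _ hw.1 _ ha _, hw.2, zero_mul]
      | true =>
        have h1 : ε 1 = false := by
          cases h1 : ε 1
          · rfl
          · exact absurd (h0.trans h1.symm) h01
        have h2 : ε 2 = true := by
          cases h2 : ε 2
          · exact absurd (h1.trans h2.symm) h12
          · rfl
        have ha0 := (hmem 0).1 h0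
        have hw := (hmem 1).2 h1
        have ha2 := (hmem 2).1 h2
        rw [show a 0 * (a 1 * (a 2 * (List.ofFn fun i : Fin m => a i.succ.succ.succ).prod))
            = a 0 * a 1 * a 2 * (List.ofFn fun i : Fin m => a i.succ.succ.succ).prod by
          simp only [mul_assoc]]
        rw [hrel₂ _ ha0 _ ha2 _ hw.1 _, hw.2, map_zero, mul_zero, zero_mul,
          zero_mul, map_zero]
  refine ⟨key, ?_⟩
  by_cases hex : ∃ j, ε j = false
  · rw [key hex]
    obtain ⟨j, hj⟩ := hex
    refine (List.prod_eq_zero ?_).symm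
    rw [List.mem_ofFn]
    exact ⟨j, ((hmem j).2 hj).2⟩
  · push_neg at hex
    have hall : ∀ j, ε j = true := fun j => by
      cases h : ε j
      · exact absurd h (hex j)
      · rfl
    match n, ε, a, halt, hall with
    | 0, ε, a, halt, hall => simp
    | (m+1), ε, a, halt, hall =>
      exact absurd ((hall 0).trans (hall 1).symm) (by simpa using halt 0)
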